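/- Characterization of simplified organizations in terms of the array: let a be a list of length L ≥ 1 of positive integers. Every internal (non-leaf) node of the canonical decoded forest decode(a) has at least two children if and only if, for every integer l with 1 ≤ l < max(a), every maximal nonempty block of consecutive entries of a that are all strictly greater than l contains at least one entry equal to l+1. -/

import Mathlib

/-- A rooted plane tree: a node carrying a finite ordered list of child subtrees.
A node with no children is a leaf. -/
inductive PTree : Type where
  | node : List PTree → PTree

namespace PTree

mutual
/-- Number of leaves of a plane tree. -/
def leaves : PTree → ℕ
  | .node [] => 1
  | .node (c :: cs) => c.leaves + leavesList cs

/-- Total number of leaves of a list of plane trees. -/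
def leavesList : List PTree → ℕ
  | [] => 0
  | c :: cs => c.leaves + leavesList cs
end

mutual
/-- Height of a plane tree (a single leaf has height 1). -/
def height : PTree → ℕ
  | .node [] => 1
  | .node (c :: cs) => 1 + max c.height (heightList cs)

/-- Maximum height among a list of plane trees (0 for the empty list). -/
def heightList : List PTree → ℕ
  | [] => 0
  | c :: cs => max c.height (heightList cs)
end

mutual
/-- Separation levels between consecutive leaves inside a tree whose root is at level `l`:
between two consecutive leaves lying in distinct children we record `l+1`
(one more than the level of their lowest common ancestor, which is the root). -/
def enc : PTree → ℕ → List ℕ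
  | .node [], _ => []
  | .node (c :: cs), l => c.enc (l + 1) ++ encList cs (l + 1)

/-- Separation levels for a list of sibling subtrees all at level `l`, including
the separator `l` between consecutive subtrees. -/
def encList : List PTree → ℕ → List ℕ
  | [], _ => []
  | c :: cs, l => (l :: c.enc l) ++ encList cs l
end

end PTree

/-- Total number of leaves of a plane forest. -/
def forestLeaves (F : List PTree) : ℕ := PTree.leavesList F

/-- Height of a plane forest: the maximum level of any of its nodes (roots are at level 1). -/
def forestHeight (F : List PTree) : ℕ := PTree.heightList F

/-- The separation array of a plane forest: for each pair of consecutive leaves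
(numbered left to right), the level at which they separate (`1` if they lie in
different trees, and `1 +` the level of their lowest common ancestor otherwise). -/
def forestSep : List PTree → List ℕ
  | [] => []
  | t :: ts => t.enc 1 ++ PTree.encList ts 1

/-- Maximum entry of a list of naturals (`0` for the empty list). -/
def listMax (a : List ℕ) : ℕ := a.foldr max 0

/-- Split a list at the positions of entries equal to `v`, producing the list of the
(possibly empty) segments delimited by those entries; a list containing `k` occurrences
of `v` yields `k + 1` segments, in left-to-right order. -/
def splitSep (v : ℕ) : List ℕ → List (List ℕ)
  | [] => [[]]
  | x :: xs =>
    match splitSep v xs with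
    | [] => [[]]
    | r :: rs => if x = v then [] :: r :: rs else (x :: r) :: rs

theorem splitSep_ne_nil (v : ℕ) (s : List ℕ) : splitSep v s ≠ [] := by
  cases s with
  | nil => simp [splitSep]
  | cons x xs =>
    simp only [splitSep]
    cases h : splitSep v xs with
    | nil => simp
    | cons r rs => by_cases hxv : x = v <;> simp [hxv]

theorem listMax_le_of_mem_splitSep {v : ℕ} {s s' : List ℕ} (h : s' ∈ splitSep v s) :
    listMax s' ≤ listMax s := by
  induction s generalizing s' with
  | nil =>
    simp only [splitSep, List.mem_singleton] at h
    subst h; exact le_rfl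
  | cons x xs ih =>
    simp only [splitSep] at h
    cases hs : splitSep v xs with
    | nil => exact absurd hs (splitSep_ne_nil v xs)
    | cons r rs =>
      rw [hs] at h
      have hr : r ∈ splitSep v xs := by rw [hs]; exact List.mem_cons_self
      by_cases hxv : x = v
      · simp only [if_pos hxv, List.mem_cons] at h
        rcases h with h | h | h
        · subst h; simp [listMax]
        · subst h
          exact le_trans (ih hr) (by simp [listMax, le_max_iff, le_refl, or_true])
        · have : s' ∈ splitSep v xs := by rw [hs]; exact List.mem_cons_of_mem _ h
          exact le_trans (ih this) (by simp [listMax, le_max_iff, le_refl, or_true])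
      · simp only [if_neg hxv, List.mem_cons] at h
        rcases h with h | h
        · subst h
          have := ih hr
          simp only [listMax, List.foldr] at *
          omega
        · have : s' ∈ splitSep v xs := by rw [hs]; exact List.mem_cons_of_mem _ h
          have := ih this
          simp only [listMax, List.foldr] at *
          omega

/-- The canonical decoding `T(s, l)` of a list `s` (all of whose entries are intended to
be strictly greater than `l`) into a plane tree rooted at level `l`: the empty list
decodes to a single leaf, and otherwise the children are obtained by decoding, at level
`l + 1`, the segments of `s` delimited by the entries equal to `l + 1`. -/
def decodeT (s : List ℕ) (l : ℕ) : PTree :=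
  if h : s = [] ∨ listMax s ≤ l then .node []
  else .node ((splitSep (l + 1) s).attach.map (fun x => decodeT x.1 (l + 1)))
termination_by listMax s + 1 - l
decreasing_by
  have h1 : listMax x.1 ≤ listMax s := listMax_le_of_mem_splitSep x.2
  push_neg at h
  omega

/-- The canonical decoded forest of a list `a`: decode, as trees rooted at level `1`,
the segments of `a` delimited by the entries equal to `1`. -/
def decode (a : List ℕ) : List PTree := (splitSep 1 a).map (fun s => decodeT s 1)

mutual
/-- A plane tree is *simplified* if every internal (non-leaf) node has at least two
children. -/
def PTree.Simplified : PTree → Prop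
  | .node [] => True
  | .node (c :: cs) => cs ≠ [] ∧ c.Simplified ∧ SimplifiedList cs

/-- Every tree in the list is simplified. -/
def SimplifiedList : List PTree → Prop
  | [] => True
  | c :: cs => c.Simplified ∧ SimplifiedList cs
end

/-- A plane forest is *simplified* if every internal (non-leaf) node of every one of its
trees has at least two children. -/
def forestSimplified (F : List PTree) : Prop := SimplifiedList F

/-- The block condition on a list `a`: for every level `l` with `1 ≤ l < max(a)`, every
maximal nonempty block of consecutive entries of `a` that are all strictly greater than
`l` (i.e. a nonempty contiguous segment `b` of `a` with all entries `> l`, whose left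
neighbour, if any, is `≤ l` and whose right neighbour, if any, is `≤ l`) contains at
least one entry equal to `l + 1`. -/
def BlockCond (a : List ℕ) : Prop :=
  ∀ l, 1 ≤ l → l < listMax a →
    ∀ u b v : List ℕ, a = u ++ b ++ v → b ≠ [] → (∀ x ∈ b, l < x) →
      (∀ y, u.getLast? = some y → y ≤ l) → (∀ y, v.head? = some y → y ≤ l) →
      (l + 1) ∈ b

section Aux

theorem splitSep_cons_self (v : ℕ) (xs : List ℕ) :
    splitSep v (v :: xs) = [] :: splitSep v xs := by
  simp only [splitSep]
  cases h : splitSep v xs with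
  | nil => exact absurd h (splitSep_ne_nil v xs)
  | cons r rs => simp

theorem splitSep_cons_ne {v x : ℕ} (hxv : x ≠ v) (xs : List ℕ) {r : List ℕ}
    {rs : List (List ℕ)} (h : splitSep v xs = r :: rs) :
    splitSep v (x :: xs) = (x :: r) :: rs := by
  simp only [splitSep, h, if_neg hxv]

theorem le_listMax_of_mem {x : ℕ} {a : List ℕ} (h : x ∈ a) : x ≤ listMax a := by
  induction a with
  | nil => simp at h
  | cons y ys ih =>
    rcases List.mem_cons.mp h with rfl | h
    · simp [listMax]
    · exact le_trans (ih h) (by simp [listMax, List.foldr])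

def joinSep (v : ℕ) : List (List ℕ) → List ℕ
  | [] => []
  | [t] => t
  | t :: ts => t ++ v :: joinSep v ts

theorem joinSep_cons (v : ℕ) (t : List ℕ) {ts : List (List ℕ)} (h : ts ≠ []) :
    joinSep v (t :: ts) = t ++ v :: joinSep v ts := by
  cases ts with
  | nil => exact absurd rfl h
  | cons r rs => rfl

theorem joinSep_splitSep (v : ℕ) (s : List ℕ) : joinSep v (splitSep v s) = s := by
  induction s with
  | nil => simp [splitSep, joinSep]
  | cons x xs ih =>
    cases h : splitSep v xs with
    | nil => exact absurd h (splitSep_ne_nil v xs)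
    | cons r rs =>
      rw [h] at ih
      by_cases hxv : x = v
      · subst hxv
        rw [splitSep_cons_self, h, joinSep_cons _ _ (by simp), ih]
        rfl
      · rw [splitSep_cons_ne hxv xs h]
        cases rs with
        | nil => simpa [joinSep] using congrArg (x :: ·) ih
        | cons r2 rs2 =>
          rw [joinSep_cons _ _ (by simp)] at ih ⊢
          rw [← ih]
          simp

theorem not_mem_of_mem_splitSep {v : ℕ} {s t : List ℕ} (h : t ∈ splitSep v s) : v ∉ t := by
  induction s generalizing t with
  | nil => simp only [splitSep, List.mem_singleton] at h; subst h; simp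
  | cons x xs ih =>
    cases hs : splitSep v xs with
    | nil => exact absurd hs (splitSep_ne_nil v xs)
    | cons r rs =>
      have hr : r ∈ splitSep v xs := by rw [hs]; exact List.mem_cons_self
      by_cases hxv : x = v
      · subst hxv
        rw [splitSep_cons_self, hs] at h
        rcases List.mem_cons.mp h with rfl | h
        · simp
        · exact ih (by rw [hs]; exact h)
      · rw [splitSep_cons_ne hxv xs hs] at h
        rcases List.mem_cons.mp h with rfl | h
        · intro hmem
          rcases List.mem_cons.mp hmem with rfl | hmem
          · exact hxv rfl
          · exact ih hr hmem
        · exact ih (by rw [hs]; exact List.mem_cons_of_mem _ h)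

theorem joinSep_middle (v : ℕ) (L₁ L₂ : List (List ℕ)) (t : List ℕ) :
    ∃ p q : List ℕ, joinSep v (L₁ ++ t :: L₂) = p ++ t ++ q ∧
      (∀ y, p.getLast? = some y → y = v) ∧ (∀ y, q.head? = some y → y = v) := by
  induction L₁ with
  | nil =>
    cases L₂ with
    | nil => exact ⟨[], [], by simp [joinSep], by simp, by simp⟩
    | cons r rs =>
      refine ⟨[], v :: joinSep v (r :: rs), ?_, by simp, by simp⟩
      rw [List.nil_append, joinSep_cons _ _ (by simp)]
      simp
  | cons u L₁ ih =>
    obtain ⟨p, q, he, hp, hq⟩ := ih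
    refine ⟨u ++ v :: p, q, ?_, ?_, hq⟩
    · rw [List.cons_append, joinSep_cons _ _ (by simp), he]
      simp
    · intro y hy
      rw [List.getLast?_append] at hy
      cases p with
      | nil => simp at hy; omega
      | cons p0 ps =>
        apply hp
        simp only [List.getLast?_cons_cons] at hy ⊢
        cases hl : (p0 :: ps).getLast? with
        | none => simp [List.getLast?_eq_none_iff] at hl
        | some z => rw [hl] at hy; simpa [hl, Option.or] using hy

theorem mem_splitSep_decomp {v : ℕ} {s t : List ℕ} (h : t ∈ splitSep v s) :
    ∃ p q : List ℕ, s = p ++ t ++ q ∧ v ∉ t ∧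
      (∀ y, p.getLast? = some y → y = v) ∧ (∀ y, q.head? = some y → y = v) := by
  obtain ⟨L₁, L₂, hL⟩ := List.append_of_mem h
  obtain ⟨p, q, he, hp, hq⟩ := joinSep_middle v L₁ L₂ t
  exact ⟨p, q, by rw [← joinSep_splitSep v s, hL, he], not_mem_of_mem_splitSep h, hp, hq⟩

theorem mem_of_mem_splitSep {v : ℕ} {s t : List ℕ} (ht : t ∈ splitSep v s) {x : ℕ}
    (hx : x ∈ t) : x ∈ s := by
  obtain ⟨p, q, he, -, -, -⟩ := mem_splitSep_decomp ht
  subst he; simp [hx]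

theorem splitSep_head (v : ℕ) (t w : List ℕ) (hv : v ∉ t)
    (hw : ∀ y, w.head? = some y → y = v) :
    ∃ rs, splitSep v (t ++ w) = t :: rs := by
  induction t with
  | nil =>
    cases w with
    | nil => exact ⟨[], rfl⟩
    | cons y w' =>
      have hyv : y = v := hw y rfl
      refine ⟨splitSep v w', ?_⟩
      rw [List.nil_append, ← hyv, splitSep_cons_self y w', hyv]
  | cons x t' ih =>
    have hxv : x ≠ v := fun h => hv (by simp [h])
    have hv' : v ∉ t' := fun h => hv (List.mem_cons_of_mem _ h)
    obtain ⟨rs, hrs⟩ := ih hv'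
    exact ⟨rs, by rw [List.cons_append, splitSep_cons_ne hxv _ hrs]⟩

theorem mem_tail_splitSep_prepend (v : ℕ) (u r : List ℕ) {t : List ℕ}
    (ht : t ∈ splitSep v r) : t ∈ (splitSep v (u ++ v :: r)).tail := by
  induction u with
  | nil =>
    rw [List.nil_append, splitSep_cons_self]
    exact ht
  | cons x u' ih =>
    rw [List.cons_append]
    cases h : splitSep v (u' ++ v :: r) with
    | nil => exact absurd h (splitSep_ne_nil v _)
    | cons h0 tl =>
      rw [h] at ih
      by_cases hxv : x = v
      · subst hxv
        rw [splitSep_cons_self, h]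
        exact List.mem_cons_of_mem _ ih
      · rw [splitSep_cons_ne hxv _ h]
        exact ih

theorem mem_splitSep_of_decomp {v : ℕ} {s t p q : List ℕ} (he : s = p ++ t ++ q)
    (hv : v ∉ t) (hp : ∀ y, p.getLast? = some y → y = v)
    (hq : ∀ y, q.head? = some y → y = v) : t ∈ splitSep v s := by
  obtain ⟨rs, hrs⟩ := splitSep_head v t q hv hq
  cases hpn : p with
  | nil =>
    subst hpn
    rw [List.nil_append] at he
    subst he
    rw [hrs]
    exact List.mem_cons_self
  | cons p0 ps =>
    have hpne : p ≠ [] := by rw [hpn]; simp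
    have hlast : p.getLast hpne = v := hp _ (List.getLast_mem_getLast? hpne)
    have hpd : p = p.dropLast ++ [v] := by
      conv_lhs => rw [← List.dropLast_append_getLast hpne]
      rw [hlast]
    have he2 : s = p.dropLast ++ v :: (t ++ q) := by
      rw [he, hpd]; simp
    rw [he2]
    apply List.mem_of_mem_tail
    apply mem_tail_splitSep_prepend
    rw [hrs]
    exact List.mem_cons_self

theorem splitSep_length (v : ℕ) (s : List ℕ) :
    (splitSep v s).length = s.count v + 1 := by
  induction s with
  | nil => simp [splitSep]
  | cons x xs ih =>
    cases h : splitSep v xs with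
    | nil => exact absurd h (splitSep_ne_nil v xs)
    | cons r rs =>
      rw [h] at ih
      by_cases hxv : x = v
      · subst hxv
        rw [splitSep_cons_self, h, List.count_cons_self]
        simp only [List.length_cons] at ih ⊢
        omega
      · rw [splitSep_cons_ne hxv xs h]
        have hc : (x :: xs).count v = xs.count v := by
          simp [List.count_cons, hxv, Ne.symm hxv]
        simp only [List.length_cons] at ih ⊢
        omega

theorem simplifiedList_iff (L : List PTree) :
    SimplifiedList L ↔ ∀ c ∈ L, c.Simplified := by
  induction L with
  | nil => simp [SimplifiedList]
  | cons c cs ih => simp [SimplifiedList, ih]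

theorem simplified_node_iff (L : List PTree) :
    (PTree.node L).Simplified ↔ (L = [] ∨ (2 ≤ L.length ∧ ∀ c ∈ L, c.Simplified)) := by
  cases L with
  | nil => simp [PTree.Simplified]
  | cons c cs =>
    simp only [PTree.Simplified, simplifiedList_iff]
    constructor
    · rintro ⟨h1, h2, h3⟩
      refine Or.inr ⟨?_, ?_⟩
      · cases cs with
        | nil => exact absurd rfl h1
        | cons _ _ => simp [Nat.succ_le_succ, Nat.succ_le_succ_iff]
      · intro d hd
        rcases List.mem_cons.mp hd with rfl | hd
        · exact h2
        · exact h3 d hd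
    · rintro (h | ⟨h1, h2⟩)
      · simp at h
      · refine ⟨?_, h2 c (List.mem_cons_self), fun d hd => h2 d (List.mem_cons_of_mem _ hd)⟩
        intro hn
        subst hn
        simp at h1

def SegN (l : ℕ) : ℕ → List ℕ → List ℕ → Prop
  | 0, s, t => t = s
  | n + 1, s, t => ∃ u, SegN l n s u ∧ t ∈ splitSep (l + n + 1) u

theorem segN_succ_iff (l n : ℕ) (s t : List ℕ) :
    SegN l (n + 1) s t ↔ ∃ u ∈ splitSep (l + 1) s, SegN (l + 1) n u t := by
  induction n generalizing t with
  | zero =>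
    constructor
    · rintro ⟨u, rfl, hm⟩
      exact ⟨t, hm, rfl⟩
    · rintro ⟨u, hu, rfl⟩
      exact ⟨s, rfl, hu⟩
  | succ n ih =>
    constructor
    · rintro ⟨w, hw, hm⟩
      obtain ⟨u, hu, hw'⟩ := (ih w).mp hw
      refine ⟨u, hu, w, hw', ?_⟩
      have harith : l + (n + 1) + 1 = l + 1 + n + 1 := by omega
      rwa [harith] at hm
    · rintro ⟨u, hu, w, hw, hm⟩
      refine ⟨w, (ih w).mpr ⟨u, hu, hw⟩, ?_⟩
      have harith : l + (n + 1) + 1 = l + 1 + n + 1 := by omega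
      rwa [harith]

theorem segN_sub {l n : ℕ} {s t : List ℕ} (h : SegN l n s t) :
    ∃ p q, s = p ++ t ++ q := by
  induction n generalizing t with
  | zero => exact ⟨[], [], by cases h; simp⟩
  | succ n ih =>
    obtain ⟨u, hu, hm⟩ := h
    obtain ⟨p, q, hpq⟩ := ih hu
    obtain ⟨p', q', he, -, -, -⟩ := mem_splitSep_decomp hm
    exact ⟨p ++ p', q' ++ q, by rw [hpq, he]; simp⟩

def Good (l : ℕ) (s : List ℕ) : Prop :=
  ∀ n t, SegN l n s t → t ≠ [] → (l + n + 1) ∈ t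

theorem good_iff (l : ℕ) (s : List ℕ) :
    Good l s ↔ ((s ≠ [] → (l + 1) ∈ s) ∧ ∀ u ∈ splitSep (l + 1) s, Good (l + 1) u) := by
  constructor
  · intro h
    refine ⟨fun hs => by simpa using h 0 s rfl hs, fun u hu n t hnt ht => ?_⟩
    have hh := h (n + 1) t ((segN_succ_iff l n s t).mpr ⟨u, hu, hnt⟩) ht
    have harith : l + (n + 1) + 1 = l + 1 + n + 1 := by omega
    rwa [harith] at hh
  · rintro ⟨h0, h1⟩ n t hnt ht
    cases n with
    | zero => cases hnt; simpa using h0 ht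
    | succ n =>
      obtain ⟨u, hu, hw⟩ := (segN_succ_iff l n s t).mp hnt
      have hh := h1 u hu n t hw ht
      have harith : l + (n + 1) + 1 = l + 1 + n + 1 := by omega
      rwa [harith]

theorem good_nil (l : ℕ) : Good l [] := by
  intro n t hnt ht
  obtain ⟨p, q, hpq⟩ := segN_sub hnt
  have hlen := congrArg List.length hpq
  simp only [List.length_nil, List.length_append] at hlen
  have : t = [] := List.length_eq_zero_iff.mp (by omega)
  exact absurd this ht

theorem simplified_decodeT_iff (s : List ℕ) (l : ℕ) (hgt : ∀ x ∈ s, l < x) :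
    (decodeT s l).Simplified ↔ Good l s := by
  by_cases hs : s = []
  · subst hs
    rw [decodeT]
    simp only [dif_pos (Or.inl rfl)]
    simp [PTree.Simplified, good_nil]
  · have hmax : ¬ (s = [] ∨ listMax s ≤ l) := by
      push_neg
      refine ⟨hs, ?_⟩
      obtain ⟨x, hx⟩ := List.exists_mem_of_ne_nil s hs
      exact lt_of_lt_of_le (hgt x hx) (le_listMax_of_mem hx)
    rw [decodeT, dif_neg hmax, simplified_node_iff, good_iff]
    have hlen : ((splitSep (l + 1) s).attach.map
        (fun x => decodeT x.1 (l + 1))).length = (splitSep (l + 1) s).length := by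
      simp
    constructor
    · rintro (h | ⟨h1, h2⟩)
      · simp only [List.map_eq_nil_iff, List.attach_eq_nil_iff] at h
        exact absurd h (splitSep_ne_nil _ _)
      · rw [hlen, splitSep_length] at h1
        have hmem : (l + 1) ∈ s := by
          rw [← List.count_pos_iff]
          omega
        refine ⟨fun _ => hmem, fun u hu => ?_⟩
        have hk : ∀ x ∈ u, l + 1 < x := by
          intro x hx
          have h1' : l < x := hgt x (mem_of_mem_splitSep hu hx)
          have h2' : x ≠ l + 1 := by
            intro hxe; exact not_mem_of_mem_splitSep hu (hxe ▸ hx)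
          omega
        rw [← simplified_decodeT_iff u (l + 1) hk]
        exact h2 _ (List.mem_map.mpr ⟨⟨u, hu⟩, List.mem_attach _ _, rfl⟩)
    · rintro ⟨h0, h1⟩
      right
      constructor
      · rw [hlen, splitSep_length]
        have : 0 < s.count (l + 1) := List.count_pos_iff.mpr (h0 hs)
        omega
      · intro c hc
        obtain ⟨⟨u, hu⟩, -, rfl⟩ := List.mem_map.mp hc
        have hk : ∀ x ∈ u, l + 1 < x := by
          intro x hx
          have h1' : l < x := hgt x (mem_of_mem_splitSep hu hx)
          have h2' : x ≠ l + 1 := by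
            intro hxe; exact not_mem_of_mem_splitSep hu (hxe ▸ hx)
          omega
        exact (simplified_decodeT_iff u (l + 1) hk).mpr (h1 u hu)
termination_by listMax s + 1 - l
decreasing_by
  all_goals
    have h1 : listMax u ≤ listMax s := listMax_le_of_mem_splitSep hu
    push_neg at hmax
    omega

theorem mem_of_getLast?_eq {l : List ℕ} {y : ℕ} (h : l.getLast? = some y) : y ∈ l := by
  rw [List.getLast?_eq_head?_reverse] at h
  exact List.mem_reverse.mp (List.mem_of_mem_head? h)

theorem blocks_iff {a : List ℕ} (hpos : ∀ x ∈ a, 1 ≤ x) :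
    ∀ n t, t ≠ [] → ((∃ s ∈ splitSep 1 a, SegN 1 n s t) ↔
      ((∀ x ∈ t, n + 1 < x) ∧ ∃ p q, a = p ++ t ++ q ∧
        (∀ y, p.getLast? = some y → y ≤ n + 1) ∧ (∀ y, q.head? = some y → y ≤ n + 1))) := by
  intro n
  induction n with
  | zero =>
    intro t ht
    have hL : (∃ s ∈ splitSep 1 a, SegN 1 0 s t) ↔ t ∈ splitSep 1 a := by
      constructor
      · rintro ⟨s, hs, h⟩
        cases h
        exact hs
      · intro h
        exact ⟨t, h, rfl⟩
    rw [hL]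
    constructor
    · intro h
      obtain ⟨p, q, he, hv, hp, hq⟩ := mem_splitSep_decomp h
      refine ⟨?_, p, q, he, fun y hy => le_of_eq (hp y hy), fun y hy => le_of_eq (hq y hy)⟩
      intro x hx
      have hxa : x ∈ a := mem_of_mem_splitSep h hx
      have := hpos x hxa
      have hne : x ≠ 1 := fun hh => hv (hh ▸ hx)
      omega
    · rintro ⟨hgt, p, q, he, hp, hq⟩
      apply mem_splitSep_of_decomp he
      · intro hmem
        have := hgt 1 hmem
        omega
      · intro y hy
        have h1 : 1 ≤ y := hpos y (by rw [he]; simp [mem_of_getLast?_eq hy])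
        have h2 := hp y hy
        omega
      · intro y hy
        have h1 : 1 ≤ y := hpos y (by rw [he]; simp [List.mem_of_mem_head? hy])
        have h2 := hq y hy
        omega
  | succ n ih =>
    intro t ht
    have hL : (∃ s ∈ splitSep 1 a, SegN 1 (n + 1) s t) ↔
        ∃ u, (∃ s ∈ splitSep 1 a, SegN 1 n s u) ∧ t ∈ splitSep (n + 2) u := by
      constructor
      · rintro ⟨s, hs, u, hu, hm⟩
        exact ⟨u, ⟨s, hs, hu⟩, by rwa [show 1 + n + 1 = n + 2 by omega] at hm⟩
      · rintro ⟨u, ⟨s, hs, hu⟩, hm⟩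
        exact ⟨s, hs, u, hu, by rwa [show 1 + n + 1 = n + 2 by omega]⟩
    rw [hL]
    constructor
    · rintro ⟨u, hu, hm⟩
      have hune : u ≠ [] := by
        obtain ⟨p', q', he', -, -, -⟩ := mem_splitSep_decomp hm
        intro h
        rw [h] at he'
        have := congrArg List.length he'
        simp only [List.length_nil, List.length_append] at this
        exact ht (List.length_eq_zero_iff.mp (by omega))
      obtain ⟨hgtu, p, q, he, hp, hq⟩ := (ih u hune).mp hu
      obtain ⟨p', q', he', hv', hp', hq'⟩ := mem_splitSep_decomp hm
      refine ⟨?_, p ++ p', q' ++ q, ?_, ?_, ?_⟩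
      · intro x hx
        have h1 : n + 1 < x := hgtu x (by rw [he']; simp [hx])
        have h2 : x ≠ n + 2 := fun hh => hv' (hh ▸ hx)
        omega
      · rw [he, he']; simp
      · intro y hy
        rw [List.getLast?_append] at hy
        cases hp'' : p'.getLast? with
        | none =>
          rw [hp'', Option.none_or] at hy
          exact le_trans (hp y hy) (by omega)
        | some z =>
          rw [hp'', show (some z).or p.getLast? = some z from rfl] at hy
          cases hy
          exact le_of_eq (hp' _ hp'')
      · intro y hy
        rw [List.head?_append] at hy
        cases hq'' : q'.head? with
        | none =>
          rw [hq'', Option.none_or] at hy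
          exact le_trans (hq y hy) (by omega)
        | some z =>
          rw [hq'', show (some z).or q.head? = some z from rfl] at hy
          cases hy
          exact le_of_eq (hq' _ hq'')
    · rintro ⟨hgt, p, q, he, hp, hq⟩
      set f : ℕ → Bool := fun x => decide (n + 1 < x) with hf
      set p₂ : List ℕ := (p.reverse.takeWhile f).reverse with hp₂
      set p₁ : List ℕ := (p.reverse.dropWhile f).reverse with hp₁
      set q₁ : List ℕ := q.takeWhile f with hq₁
      set q₂ : List ℕ := q.dropWhile f with hq₂
      have hpsplit : p = p₁ ++ p₂ := by
        rw [hp₁, hp₂, ← List.reverse_append, List.takeWhile_append_dropWhile,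
          List.reverse_reverse]
      have hqsplit : q = q₁ ++ q₂ := (List.takeWhile_append_dropWhile (p := f) (l := q)).symm
      have hmemp₂ : ∀ x ∈ p₂, n + 1 < x := by
        intro x hx
        have := List.mem_takeWhile_imp (List.mem_reverse.mp hx)
        simpa [hf] using this
      have hmemq₁ : ∀ x ∈ q₁, n + 1 < x := by
        intro x hx
        have := List.mem_takeWhile_imp hx
        simpa [hf] using this
      set u : List ℕ := p₂ ++ t ++ q₁ with hu
      have hau : a = p₁ ++ u ++ q₂ := by
        rw [he, hpsplit, hqsplit, hu]; simp
      have hune : u ≠ [] := by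
        intro h
        rw [hu] at h
        have := congrArg List.length h
        simp only [List.length_append, List.length_nil] at this
        exact ht (List.length_eq_zero_iff.mp (by omega))
      have hblocku : (∀ x ∈ u, n + 1 < x) ∧ ∃ p' q', a = p' ++ u ++ q' ∧
          (∀ y, p'.getLast? = some y → y ≤ n + 1) ∧ (∀ y, q'.head? = some y → y ≤ n + 1) := by
        refine ⟨?_, p₁, q₂, hau, ?_, ?_⟩
        · intro x hx
          rw [hu] at hx
          simp only [List.mem_append] at hx
          rcases hx with (hx | hx) | hx
          · exact hmemp₂ x hx
          · have := hgt x hx; omega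
          · exact hmemq₁ x hx
        · intro y hy
          rw [hp₁, List.getLast?_reverse] at hy
          have hnot := List.head?_dropWhile_not f p.reverse
          rw [hy] at hnot
          simp only [hf, decide_eq_false_iff_not, not_lt] at hnot
          exact hnot
        · intro y hy
          have hnot := List.head?_dropWhile_not f q
          rw [← hq₂] at hnot
          rw [hy] at hnot
          simp only [hf, decide_eq_false_iff_not, not_lt] at hnot
          exact hnot
      obtain ⟨s, hs, hsu⟩ := (ih u hune).mpr hblocku
      refine ⟨u, ⟨s, hs, hsu⟩, ?_⟩
      apply mem_splitSep_of_decomp (v := n + 2) (p := p₂) (q := q₁) rfl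
      · intro hmem
        have := hgt _ hmem
        omega
      · intro y hy
        have hyp : n + 1 < y := hmemp₂ y (mem_of_getLast?_eq hy)
        have hple : y ≤ n + 2 := by
          apply hp
          rw [hpsplit, List.getLast?_append, hy]
          rfl
        omega
      · intro y hy
        have hyq : n + 1 < y := hmemq₁ y (List.mem_of_mem_head? hy)
        have hqle : y ≤ n + 2 := by
          apply hq
          rw [hqsplit, List.head?_append, hy]
          rfl
        omega

/-- characterization of simplified organizations in terms of the
array. Let `a` be a list of length `L ≥ 1` of positive integers. Every internal
(non-leaf) node of the canonical decoded forest `decode a` has at least two children if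
and only if, for every integer `l` with `1 ≤ l < max(a)`, every maximal nonempty block
of consecutive entries of `a` that are all strictly greater than `l` contains at least
one entry equal to `l + 1`. -/
theorem decode_simplified_iff_blockCond (a : List ℕ) (hlen : 1 ≤ a.length)
    (hpos : ∀ x ∈ a, 1 ≤ x) :
    forestSimplified (decode a) ↔ BlockCond a := by
  have hk : ∀ s ∈ splitSep 1 a, ∀ x ∈ s, 1 < x := by
    intro s hs x hx
    have h1 := hpos x (mem_of_mem_splitSep hs hx)
    have h2 : x ≠ 1 := fun hh => not_mem_of_mem_splitSep hs (hh ▸ hx)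
    omega
  constructor
  · intro hF
    have hGood : ∀ s ∈ splitSep 1 a, Good 1 s := by
      intro s hs
      rw [← simplified_decodeT_iff s 1 (hk s hs)]
      exact (simplifiedList_iff _).mp hF _ (List.mem_map.mpr ⟨s, hs, rfl⟩)
    intro l hl hlm u b v he hb hgt hu hv
    obtain ⟨n, rfl⟩ : ∃ n, l = n + 1 := ⟨l - 1, by omega⟩
    obtain ⟨s, hs, hseg⟩ := (blocks_iff hpos n b hb).mpr ⟨hgt, u, v, he, hu, hv⟩
    have hh := hGood s hs n b hseg hb
    rwa [show 1 + n + 1 = n + 1 + 1 by omega] at hh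
  · intro hBC
    rw [forestSimplified, decode] at *
    rw [simplifiedList_iff]
    intro c hc
    obtain ⟨s, hs, rfl⟩ := List.mem_map.mp hc
    rw [simplified_decodeT_iff s 1 (hk s hs)]
    intro n t hseg ht
    obtain ⟨hgt, p, q, he, hp', hq'⟩ := (blocks_iff hpos n t ht).mp ⟨s, hs, hseg⟩
    obtain ⟨x, hx⟩ := List.exists_mem_of_ne_nil t ht
    have hxa : x ∈ a := by rw [he]; simp [hx]
    have hlm : n + 1 < listMax a := lt_of_lt_of_le (hgt x hx) (le_listMax_of_mem hxa)
    have hh := hBC (n + 1) (by omega) hlm p t q he ht hgt hp' hq'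
    rwa [show 1 + n + 1 = n + 1 + 1 by omega]

end Aux
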